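/- Let R be a commutative ring, n ≥ 1, and let g and u be Laurent polynomials in x_1,…,x_n over R. For 1 ≤ i ≤ n let θ_i denote the operator x_i ∂/∂x_i on Laurent polynomials, i.e., θ_i(Σ_w u_w x^w) = Σ_w w_i u_w x^w. Then for every m ≥ 1, the constant term of the Laurent polynomial g^m · θ_i(u) lies in the ideal mR. (This is the key divisibility showing that ω ↦ constant term of g^m ω is a period map mod m: it sends derivatives into mR.) -/

import Mathlib

noncomputable section

/-- The operator `θ_i = x_i ∂/∂x_i` on Laurent polynomials:
`θ_i(Σ_w u_w x^w) = Σ_w w_i u_w x^w`. -/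
def theta {R : Type*} [CommRing R] {n : ℕ} (i : Fin n)
    (u : AddMonoidAlgebra R (Fin n → ℤ)) : AddMonoidAlgebra R (Fin n → ℤ) :=
  AddMonoidAlgebra.ofCoeff (Finsupp.onFinset u.coeff.support (fun w => (w i : R) * u.coeff w)
    (fun w h => Finsupp.mem_support_iff.2 fun h0 => h (by simp [h0])))

lemma theta_apply {R : Type*} [CommRing R] {n : ℕ} (i : Fin n)
    (u : AddMonoidAlgebra R (Fin n → ℤ)) (w : Fin n → ℤ) :
    (theta i u).coeff w = (w i : R) * u.coeff w := rfl

lemma theta_apply_zero {R : Type*} [CommRing R] {n : ℕ} (i : Fin n)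
    (u : AddMonoidAlgebra R (Fin n → ℤ)) : (theta i u).coeff 0 = 0 := by
  simp [theta_apply]

lemma theta_mul {R : Type*} [CommRing R] {n : ℕ} (i : Fin n)
    (f g : AddMonoidAlgebra R (Fin n → ℤ)) :
    theta i (f * g) = theta i f * g + f * theta i g := by
  ext w
  rw [AddMonoidAlgebra.coeff_add, Finsupp.add_apply, theta_apply, AddMonoidAlgebra.coeff_mul,
    AddMonoidAlgebra.coeff_mul, AddMonoidAlgebra.coeff_mul]
  have h1 : ((theta i f).coeff.sum fun a₁ b₁ => g.coeff.sum fun a₂ b₂ =>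
        if a₁ + a₂ = w then b₁ * b₂ else 0)
      = ∑ a₁ ∈ f.coeff.support, g.coeff.sum fun a₂ b₂ =>
        if a₁ + a₂ = w then (theta i f).coeff a₁ * b₂ else 0 := by
    apply Finsupp.sum_of_support_subset _ (Finsupp.support_onFinset_subset
      (hf := fun w h => Finsupp.mem_support_iff.2 fun h0 => h (by simp [h0])))
    intro a _
    simp [Finsupp.sum]
  have h2 : ∀ (a₁ : Fin n → ℤ) (c : R), ((theta i g).coeff.sum fun a₂ b₂ =>
        if a₁ + a₂ = w then c * b₂ else 0)
      = ∑ a₂ ∈ g.coeff.support, if a₁ + a₂ = w then c * (theta i g).coeff a₂ else 0 := by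
    intro a₁ c
    apply Finsupp.sum_of_support_subset _ (Finsupp.support_onFinset_subset
      (hf := fun w h => Finsupp.mem_support_iff.2 fun h0 => h (by simp [h0])))
    intro a _
    simp
  rw [h1]
  simp only [h2]
  simp only [Finsupp.sum, Finset.mul_sum, ← Finset.sum_add_distrib]
  refine Finset.sum_congr rfl fun a₁ _ => Finset.sum_congr rfl fun a₂ _ => ?_
  split_ifs with h
  · have : w i = a₁ i + a₂ i := by rw [← h]; rfl
    rw [theta_apply, theta_apply, this]
    push_cast
    ring
  · simp

lemma theta_pow {R : Type*} [CommRing R] {n : ℕ} (i : Fin n)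
    (g : AddMonoidAlgebra R (Fin n → ℤ)) :
    ∀ k : ℕ, theta i (g ^ (k + 1)) = (k + 1) • (g ^ k * theta i g) := by
  intro k
  induction k with
  | zero => simp
  | succ k ih =>
      rw [pow_succ, theta_mul, ih, smul_mul_assoc]
      have : g ^ k * theta i g * g = g ^ (k + 1) * theta i g := by ring
      rw [this, succ_nsmul (M := AddMonoidAlgebra R (Fin n → ℤ)) _ (k+1),
        succ_nsmul (M := AddMonoidAlgebra R (Fin n → ℤ)) _ k]

/-- Key divisibility: the constant term of `g^m · θ_i(u)` lies in `mR`; that is,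
the period map mod `m` given by `ω ↦ constant term of g^m ω` kills derivatives mod `m`. -/
theorem constantTerm_pow_mul_theta_dvd
    {R : Type*} [CommRing R] (n : ℕ) (hn : 1 ≤ n)
    (g u : AddMonoidAlgebra R (Fin n → ℤ)) (i : Fin n)
    (m : ℕ) (hm : 1 ≤ m) :
    (m : R) ∣ (g ^ m * theta i u).coeff 0 := by
  obtain ⟨k, rfl⟩ := Nat.exists_eq_add_of_le hm
  have key : g ^ (1 + k) * theta i u
      = theta i (g ^ (1 + k) * u) - theta i (g ^ (1 + k)) * u := by
    rw [theta_mul]; ring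
  rw [key, AddMonoidAlgebra.coeff_sub, Finsupp.sub_apply, theta_apply_zero, zero_sub]
  rw [add_comm 1 k, theta_pow]
  refine ⟨-((g ^ k * theta i g * u).coeff 0), ?_⟩
  rw [smul_mul_assoc, AddMonoidAlgebra.coeff_smul, Finsupp.smul_apply, nsmul_eq_mul]
  push_cast
  ring
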